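/- Let E be a separable Banach space and T : E → E a bounded linear operator with ‖T‖ ≤ 1. Then there exist a bounded linear operator U : ℓ¹ → ℓ¹ with ‖U‖ ≤ 1 (depending only on a universal construction, but for this statement existence suffices) and a surjective contractive linear operator π : ℓ¹ → E such that π ∘ U = T ∘ π. -/

import Mathlib

set_option linter.unusedSectionVars false

noncomputable section DM14aux2

namespace DM14

variable {F : Type*} [NormedAddCommGroup F] [NormedSpace ℝ F] [CompleteSpace F]


lemma summable_norm_l1 (a : lp (fun _ : ℕ => ℝ) 1) : Summable fun n => ‖a n‖ := by
  have h := (lp.memℓp a).summable (p := 1) (by norm_num)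
  simpa using h

lemma norm_l1_eq (a : lp (fun _ : ℕ => ℝ) 1) : ‖a‖ = ∑' n, ‖a n‖ := by
  have h := lp.norm_eq_tsum_rpow (p := 1) (by norm_num) a
  simpa using h

lemma summable_norm_smul_l1 (v : ℕ → F) (hv : ∀ n, ‖v n‖ ≤ 1) (a : lp (fun _ : ℕ => ℝ) 1) :
    Summable fun n => ‖a n • v n‖ := by
  refine Summable.of_nonneg_of_le (fun n => norm_nonneg _) (fun n => ?_) (summable_norm_l1 a)
  rw [norm_smul]
  calc ‖a n‖ * ‖v n‖ ≤ ‖a n‖ * 1 := mul_le_mul_of_nonneg_left (hv n) (norm_nonneg _)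
    _ = ‖a n‖ := mul_one _

lemma summable_smul_l1 (v : ℕ → F) (hv : ∀ n, ‖v n‖ ≤ 1) (a : lp (fun _ : ℕ => ℝ) 1) :
    Summable fun n => a n • v n :=
  (summable_norm_smul_l1 v hv a).of_norm

def sumCLM (v : ℕ → F) (hv : ∀ n, ‖v n‖ ≤ 1) : lp (fun _ : ℕ => ℝ) 1 →L[ℝ] F :=
  LinearMap.mkContinuous
    { toFun := fun a => ∑' n, a n • v n
      map_add' := fun a b => by
        show (∑' n, (a + b : lp (fun _ : ℕ => ℝ) 1) n • v n)
          = (∑' n, a n • v n) + ∑' n, b n • v n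
        have h1 : (fun n => (a + b : lp (fun _ : ℕ => ℝ) 1) n • v n)
            = fun n => a n • v n + b n • v n := by
          funext n
          rw [lp.coeFn_add]
          simp [add_smul]
        rw [h1, Summable.tsum_add (summable_smul_l1 v hv a) (summable_smul_l1 v hv b)]
      map_smul' := fun c a => by
        show (∑' n, (c • a : lp (fun _ : ℕ => ℝ) 1) n • v n) = c • ∑' n, a n • v n
        have h1 : (fun n => (c • a : lp (fun _ : ℕ => ℝ) 1) n • v n)
            = fun n => c • (a n • v n) := by
          funext n
          rw [lp.coeFn_smul]
          simp [smul_smul]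
        rw [h1]
        exact (((summable_smul_l1 v hv a).hasSum.const_smul c).tsum_eq) }
    1
    (fun a => by
      show ‖∑' n, a n • v n‖ ≤ 1 * ‖a‖
      have h1 : ‖∑' n, a n • v n‖ ≤ ∑' n, ‖a n • v n‖ :=
        norm_tsum_le_tsum_norm (summable_norm_smul_l1 v hv a)
      have h2 : ∑' n, ‖a n • v n‖ ≤ ∑' n, ‖a n‖ := by
        refine Summable.tsum_le_tsum (fun n => ?_) (summable_norm_smul_l1 v hv a) (summable_norm_l1 a)
        rw [norm_smul]
        calc ‖a n‖ * ‖v n‖ ≤ ‖a n‖ * 1 :=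
              mul_le_mul_of_nonneg_left (hv n) (norm_nonneg _)
          _ = ‖a n‖ := mul_one _
      calc ‖∑' n, a n • v n‖ ≤ ∑' n, ‖a n‖ := h1.trans h2
        _ = 1 * ‖a‖ := by rw [norm_l1_eq a, one_mul])

lemma sumCLM_apply (v : ℕ → F) (hv : ∀ n, ‖v n‖ ≤ 1) (a : lp (fun _ : ℕ => ℝ) 1) :
    sumCLM v hv a = ∑' n, a n • v n := rfl

lemma sumCLM_norm_le (v : ℕ → F) (hv : ∀ n, ‖v n‖ ≤ 1) : ‖sumCLM v hv‖ ≤ 1 :=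
  LinearMap.mkContinuous_norm_le _ zero_le_one _

lemma sumCLM_single (v : ℕ → F) (hv : ∀ n, ‖v n‖ ≤ 1) (n : ℕ) (c : ℝ) :
    sumCLM v hv (lp.single 1 n c) = c • v n := by
  rw [sumCLM_apply]
  have h : ∀ m, m ≠ n → (lp.single (E := fun _ : ℕ => ℝ) 1 n c) m • v m = 0 := by
    intro m hm
    rw [lp.single_apply_ne (E := fun _ : ℕ => ℝ) 1 n c hm, zero_smul]
  rw [tsum_eq_single n h, lp.single_apply_self]

lemma reach (x : ℕ → F) (hx : ∀ n, ‖x n‖ < 1)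
    (hd : ∀ z : F, ‖z‖ < 1 → ∀ ε > 0, ∃ k, ‖z - x k‖ < ε)
    (y : F) (hy : ‖y‖ < 1) :
    ∃ u : lp (fun _ : ℕ => ℝ) 1, ‖u‖ ≤ 1 ∧ sumCLM x (fun n => (hx n).le) u = y := by
  set s : ℝ := (1 + ‖y‖) / 2 with hs_def
  set θ : ℝ := (1 - ‖y‖) / 2 with hθ_def
  have hy0 : (0 : ℝ) ≤ ‖y‖ := norm_nonneg y
  have hs : 0 < s := by positivity
  have hθ : 0 < θ := by simp only [hθ_def]; linarith
  have hθ1 : θ < 1 := by simp only [hθ_def]; linarith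
  have hsθ : 1 - θ = s := by simp only [hθ_def, hs_def]; ring
  -- one greedy step
  have step : ∀ (s' : ℝ) (z : F), 0 < s' → ‖z‖ < s' → ∃ k, ‖z - s' • x k‖ < s' * θ := by
    intro s' z hs' hz
    have h1 : ‖s'⁻¹ • z‖ < 1 := by
      rw [norm_smul, norm_inv, Real.norm_eq_abs, abs_of_pos hs']
      rw [inv_mul_lt_iff₀ hs', mul_one]
      exact hz
    obtain ⟨k, hk⟩ := hd _ h1 θ hθ
    refine ⟨k, ?_⟩
    have h2 : z - s' • x k = s' • (s'⁻¹ • z - x k) := by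
      rw [smul_sub, smul_smul, mul_inv_cancel₀ hs'.ne', one_smul]
    rw [h2, norm_smul, Real.norm_eq_abs, abs_of_pos hs']
    exact (mul_lt_mul_iff_right₀ hs').mpr hk
  -- greedy choice function
  have hchoice : ∀ (s' : ℝ) (z : F), ∃ k : ℕ,
      0 < s' → ‖z‖ < s' → ‖z - s' • x k‖ < s' * θ := by
    intro s' z
    by_cases h : 0 < s' ∧ ‖z‖ < s'
    · obtain ⟨k, hk⟩ := step s' z h.1 h.2
      exact ⟨k, fun _ _ => hk⟩
    · exact ⟨0, fun h1 h2 => absurd ⟨h1, h2⟩ h⟩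
  choose ψ hψ using hchoice
  -- residual sequence
  set Fs : ℕ → F := fun j => Nat.rec y
    (fun j z => z - (s * θ ^ j) • x (ψ (s * θ ^ j) z)) j with hFs_def
  have hF0 : Fs 0 = y := rfl
  have hFsucc : ∀ j, Fs (j + 1) = Fs j - (s * θ ^ j) • x (ψ (s * θ ^ j) (Fs j)) := fun j => rfl
  set K : ℕ → ℕ := fun j => ψ (s * θ ^ j) (Fs j) with hK_def
  have hKx : ∀ j, x (ψ (s * θ ^ j) (Fs j)) = x (K j) := fun j => rfl
  have hψK : ∀ j, ψ (s * θ ^ j) (Fs j) = K j := fun j => rfl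
  clear_value K
  simp only [hψK] at hFsucc
  have hψ' : ∀ j, ‖Fs j‖ < s * θ ^ j → ‖Fs j - (s * θ ^ j) • x (K j)‖ < s * θ ^ j * θ := by
    intro j hj
    have := hψ (s * θ ^ j) (Fs j) (by positivity) hj
    rwa [hψK j] at this
  clear_value Fs
  have hpos : ∀ j, 0 < s * θ ^ j := fun j => by positivity
  have hinv : ∀ j, ‖Fs j‖ < s * θ ^ j := by
    intro j
    induction j with
    | zero =>
      rw [hF0]
      simp only [pow_zero, mul_one, hs_def]
      linarith
    | succ j ih =>
      have hspec := hψ' j ih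
      rw [hFsucc j]
      calc ‖Fs j - (s * θ ^ j) • x (K j)‖
          < s * θ ^ j * θ := hspec
        _ = s * θ ^ (j + 1) := by ring
  -- telescoping
  have htel : ∀ J, y - ∑ j ∈ Finset.range J, (s * θ ^ j) • x (K j) = Fs J := by
    intro J
    induction J with
    | zero => rw [Finset.sum_range_zero, sub_zero, hF0]
    | succ J ih =>
      rw [Finset.sum_range_succ, hFsucc J, ← ih]
      abel
  -- summability of geometric majorant
  have hgeo : Summable fun j : ℕ => s * θ ^ j :=
    (summable_geometric_of_lt_one hθ.le hθ1).mul_left s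
  have hgeo_sum : (∑' j : ℕ, s * θ ^ j) = 1 := by
    rw [tsum_mul_left, tsum_geometric_of_lt_one hθ.le hθ1, hsθ]
    exact mul_inv_cancel₀ hs.ne'
  -- the lifted element
  have hnorm_single : ∀ j : ℕ,
      ‖lp.single (E := fun _ : ℕ => ℝ) 1 (K j) (s * θ ^ j)‖ = s * θ ^ j := by
    intro j
    have h := lp.norm_single (E := fun _ : ℕ => ℝ) (p := 1) (by norm_num)
      (K j) (s * θ ^ j)
    rw [h, Real.norm_eq_abs, abs_of_pos (hpos j)]
  have hsum_singles : Summable fun j : ℕ =>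
      lp.single (E := fun _ : ℕ => ℝ) 1 (K j) (s * θ ^ j) := by
    refine Summable.of_norm ?_
    simpa only [hnorm_single] using hgeo
  refine ⟨∑' j, lp.single (E := fun _ : ℕ => ℝ) 1 (K j) (s * θ ^ j), ?_, ?_⟩
  · calc ‖∑' j, lp.single (E := fun _ : ℕ => ℝ) 1 (K j) (s * θ ^ j)‖
        ≤ ∑' j, ‖lp.single (E := fun _ : ℕ => ℝ) 1 (K j) (s * θ ^ j)‖ :=
          norm_tsum_le_tsum_norm (by simpa only [hnorm_single] using hgeo)
      _ = ∑' j : ℕ, s * θ ^ j := by simp only [hnorm_single]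
      _ = 1 := hgeo_sum
  · rw [ContinuousLinearMap.map_tsum _ hsum_singles]
    have h1 : ∀ j, sumCLM x (fun n => (hx n).le)
        (lp.single (E := fun _ : ℕ => ℝ) 1 (K j) (s * θ ^ j))
        = (s * θ ^ j) • x (K j) := fun j => sumCLM_single _ _ _ _
    simp only [h1]
    -- show the tsum equals y via partial sums
    have hsummable : Summable fun j : ℕ => (s * θ ^ j) • x (K j) := by
      refine Summable.of_norm (Summable.of_nonneg_of_le (fun j => norm_nonneg _)
        (fun j => ?_) hgeo)
      rw [norm_smul, Real.norm_eq_abs, abs_of_pos (hpos j)]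
      calc s * θ ^ j * ‖x (K j)‖ ≤ s * θ ^ j * 1 :=
            mul_le_mul_of_nonneg_left (hx (K j)).le (hpos j).le
        _ = s * θ ^ j := mul_one _
    have hlim1 : Filter.Tendsto (fun J => ∑ j ∈ Finset.range J, (s * θ ^ j) • x (K j))
        Filter.atTop (nhds (∑' j, (s * θ ^ j) • x (K j))) :=
      hsummable.hasSum.tendsto_sum_nat
    have hlim2 : Filter.Tendsto (fun J => ∑ j ∈ Finset.range J, (s * θ ^ j) • x (K j))
        Filter.atTop (nhds y) := by
      have hF_to_zero : Filter.Tendsto Fs Filter.atTop (nhds 0) := by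
        refine squeeze_zero_norm (fun J => (hinv J).le) ?_
        have := (tendsto_pow_atTop_nhds_zero_of_lt_one hθ.le hθ1).const_mul s
        simpa using this
      have : Filter.Tendsto (fun J => y - Fs J) Filter.atTop (nhds (y - 0)) :=
        tendsto_const_nhds.sub hF_to_zero
      rw [sub_zero] at this
      refine this.congr (fun J => ?_)
      rw [← htel J]
      abel
    exact tendsto_nhds_unique hlim1 hlim2

end DM14

end DM14aux2

theorem stmt14 (E : Type*) [NormedAddCommGroup E] [NormedSpace ℝ E]
    [CompleteSpace E] [TopologicalSpace.SeparableSpace E]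
    (T : E →L[ℝ] E) (hT : ‖T‖ ≤ 1) :
    ∃ U : lp (fun _ : ℕ => ℝ) 1 →L[ℝ] lp (fun _ : ℕ => ℝ) 1, ‖U‖ ≤ 1 ∧
      ∃ π : lp (fun _ : ℕ => ℝ) 1 →L[ℝ] E,
        Function.Surjective π ∧ ‖π‖ ≤ 1 ∧ π.comp U = T.comp π := by
  classical
  have hne : Nonempty E := ⟨0⟩
  set d : ℕ → E := TopologicalSpace.denseSeq E with hd_def
  have hdense : DenseRange d := TopologicalSpace.denseRange_denseSeq E
  set x : ℕ → E := fun n => if ‖d n‖ < 1 then d n else 0 with hx_def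
  have hx : ∀ n, ‖x n‖ < 1 := by
    intro n
    by_cases h : ‖d n‖ < 1
    · simpa [hx_def, h] using h
    · simp [hx_def, h]
  have hd : ∀ z : E, ‖z‖ < 1 → ∀ ε > 0, ∃ k, ‖z - x k‖ < ε := by
    intro z hz ε hε
    have hδ : 0 < min ε (1 - ‖z‖) := lt_min hε (by linarith)
    obtain ⟨k, hk⟩ := Metric.denseRange_iff.mp hdense z (min ε (1 - ‖z‖)) hδ
    have hdist : ‖z - d k‖ < min ε (1 - ‖z‖) := by
      rwa [← dist_eq_norm]
    have hdk : ‖d k‖ < 1 := by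
      have h1 : ‖d k‖ ≤ ‖z‖ + ‖d k - z‖ := norm_le_insert' (d k) z
      have h2 : ‖d k - z‖ < 1 - ‖z‖ := by
        rw [norm_sub_rev]
        exact hdist.trans_le (min_le_right _ _)
      linarith
    refine ⟨k, ?_⟩
    have hxk : x k = d k := by simp [hx_def, hdk]
    rw [hxk]
    exact hdist.trans_le (min_le_left _ _)
  set π : lp (fun _ : ℕ => ℝ) 1 →L[ℝ] E := DM14.sumCLM x (fun n => (hx n).le) with hπ_def
  have hπnorm : ‖π‖ ≤ 1 := DM14.sumCLM_norm_le _ _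
  have hreach : ∀ y : E, ‖y‖ < 1 → ∃ u : lp (fun _ : ℕ => ℝ) 1, ‖u‖ ≤ 1 ∧ π u = y :=
    fun y hy => DM14.reach x hx hd y hy
  -- surjectivity
  have hsurj : Function.Surjective π := by
    intro y
    rcases eq_or_ne y 0 with rfl | hy0
    · exact ⟨0, map_zero π⟩
    · have hc : (0 : ℝ) < 2 * ‖y‖ := by
        have := norm_pos_iff.mpr hy0
        linarith
      have hz : ‖(2 * ‖y‖)⁻¹ • y‖ < 1 := by
        rw [norm_smul, norm_inv, Real.norm_eq_abs, abs_of_pos hc]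
        rw [inv_mul_lt_iff₀ hc, mul_one]
        have := norm_pos_iff.mpr hy0
        linarith
      obtain ⟨u, _, hu⟩ := hreach _ hz
      refine ⟨(2 * ‖y‖) • u, ?_⟩
      rw [map_smul, hu, smul_inv_smul₀ hc.ne']
  -- lifted basis vectors
  have hTx : ∀ n, ‖T (x n)‖ < 1 := by
    intro n
    calc ‖T (x n)‖ ≤ ‖T‖ * ‖x n‖ := T.le_opNorm _
      _ ≤ 1 * ‖x n‖ := mul_le_mul_of_nonneg_right hT (norm_nonneg _)
      _ = ‖x n‖ := one_mul _
      _ < 1 := hx n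
  choose u hu1 hu2 using fun n => hreach (T (x n)) (hTx n)
  set U : lp (fun _ : ℕ => ℝ) 1 →L[ℝ] lp (fun _ : ℕ => ℝ) 1 := DM14.sumCLM u hu1 with hU_def
  refine ⟨U, DM14.sumCLM_norm_le _ _, π, hsurj, hπnorm, ?_⟩
  ext a
  show π (U a) = T (π a)
  rw [hU_def, DM14.sumCLM_apply u hu1 a,
    ContinuousLinearMap.map_tsum π (DM14.summable_smul_l1 u hu1 a)]
  have h1 : ∀ n, π (a n • u n) = a n • T (x n) := by
    intro n
    rw [map_smul, hu2 n]
  simp only [h1]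
  rw [hπ_def, DM14.sumCLM_apply _ _ a,
    ContinuousLinearMap.map_tsum T (DM14.summable_smul_l1 x (fun n => (hx n).le) a)]
  exact tsum_congr fun n => by rw [map_smul]
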